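/- Let L be a unimodular lattice in ℝ^n. If w and w' are characteristic vectors of L, then their norms are congruent modulo 8: ⟪w,w⟫ − ⟪w',w'⟫ ∈ 8ℤ. -/
import Mathlib


open scoped RealInnerProductSpace

/-- A unimodular (self-dual) lattice in `ℝⁿ`: a `ℤ`-submodule of Euclidean space that is
discrete, spans `ℝⁿ` over `ℝ`, and is self-dual: a vector `v` belongs to the lattice iff
its inner product with every lattice vector is an integer. -/
def IsUnimodularLattice (n : ℕ) (L : Submodule ℤ (EuclideanSpace ℝ (Fin n))) : Prop :=
  DiscreteTopology L ∧
  Submodule.span ℝ (L : Set (EuclideanSpace ℝ (Fin n))) = ⊤ ∧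
  ∀ v : EuclideanSpace ℝ (Fin n), v ∈ L ↔ ∀ y ∈ L, ∃ k : ℤ, ⟪v, y⟫ = (k : ℝ)

/-- A characteristic vector of a lattice `L`: a vector `w ∈ L` with
`⟪w,x⟫ ≡ ⟪x,x⟫ (mod 2)` for all `x ∈ L`. -/
def IsCharacteristic (n : ℕ) (L : Submodule ℤ (EuclideanSpace ℝ (Fin n)))
    (w : EuclideanSpace ℝ (Fin n)) : Prop :=
  w ∈ L ∧ ∀ x ∈ L, ∃ k : ℤ, ⟪w, x⟫ - ⟪x, x⟫ = 2 * (k : ℝ)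

/-- Any two characteristic vectors of a unimodular lattice have norms congruent mod 8. -/
theorem characteristic_norm_congruent_mod_eight (n : ℕ)
    (L : Submodule ℤ (EuclideanSpace ℝ (Fin n))) (hL : IsUnimodularLattice n L)
    (w w' : EuclideanSpace ℝ (Fin n)) (hw : IsCharacteristic n L w)
    (hw' : IsCharacteristic n L w') :
    ∃ k : ℤ, ⟪w, w⟫ - ⟪w', w'⟫ = 8 * (k : ℝ) := by
  obtain ⟨-, -, hdual⟩ := hL
  obtain ⟨hwL, hwc⟩ := hw
  obtain ⟨hw'L, hw'c⟩ := hw'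
  obtain ⟨v, hv⟩ : ∃ v : EuclideanSpace ℝ (Fin n), v = (2⁻¹ : ℝ) • (w - w') := ⟨_, rfl⟩
  have hvL : v ∈ L := by
    rw [hdual]
    intro y hy
    obtain ⟨k₁, hk₁⟩ := hwc y hy
    obtain ⟨k₂, hk₂⟩ := hw'c y hy
    refine ⟨k₁ - k₂, ?_⟩
    have : ⟪v, y⟫ = (2⁻¹ : ℝ) * (⟪w, y⟫ - ⟪w', y⟫) := by
      rw [hv, real_inner_smul_left, inner_sub_left]
    rw [this]
    push_cast
    linarith
  obtain ⟨m, hm⟩ := (hdual v).mp hvL v hvL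
  obtain ⟨k, hk⟩ := hw'c v hvL
  have hwv : w = w' + (2 : ℝ) • v := by
    rw [hv, smul_smul]
    norm_num
  refine ⟨k + m, ?_⟩
  have hexp : ⟪w, w⟫ = ⟪w', w'⟫ + 4 * ⟪w', v⟫ + 4 * ⟪v, v⟫ := by
    rw [hwv, real_inner_add_add_self]
    simp only [real_inner_smul_left, real_inner_smul_right]
    ring
  push_cast
  rw [hexp]
  linarith
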